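/- arXiv:2407.14998 — 2 statements merged into one kernel-verified Lean document; each statement's English description precedes it below -/
import Mathlib

section
/- Let F be a field and let L be a nilpotent symplectic alternating algebra of dimension 10 over F whose centre Z(L) is isotropic of dimension 4, with L³ = Z(L), and suppose L is of type C. Then for each nonzero vector u ∈ L/L² there exists a unique totally isotropic plane (2-dimensional subspace of L/L²) containing u. -/
universe u

/-- A symplectic alternating algebra (SAA) over a field `F`: a vector space with a
nondegenerate alternating bilinear form and an alternating bilinear product
satisfying `(x·y, z) = (y·z, x)`. -/
structure SAA (F : Type u) [Field F] : Type (u + 1) where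
  carrier : Type u
  [isAddCommGroup : AddCommGroup carrier]
  [isModule : Module F carrier]
  form : carrier →ₗ[F] carrier →ₗ[F] F
  mul : carrier →ₗ[F] carrier →ₗ[F] carrier
  form_alt : ∀ x, form x x = 0
  form_nondeg : ∀ x, (∀ y, form x y = 0) → x = 0
  mul_alt : ∀ x, mul x x = 0
  form_symm : ∀ x y z, form (mul x y) z = form (mul y z) x

attribute [instance] SAA.isAddCommGroup SAA.isModule

namespace SAA

variable {F : Type u} [Field F]

/-- The span of all products `u·v` with `u ∈ U`, `v ∈ V`. -/
def prodSpace (L : SAA F) (U V : Submodule F L.carrier) : Submodule F L.carrier :=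
  Submodule.span F {w | ∃ u ∈ U, ∃ v ∈ V, L.mul u v = w}

/-- Powers of the algebra: `L¹ = L`, `L^{k+1} = span {u·v : u ∈ L^k, v ∈ L}`. -/
def pow (L : SAA F) : ℕ → Submodule F L.carrier
  | 0 => ⊤
  | 1 => ⊤
  | n + 2 => L.prodSpace (L.pow (n + 1)) ⊤

/-- The centre `Z(L) = {x : x·y = 0 for all y}`. -/
def centre (L : SAA F) : Submodule F L.carrier where
  carrier := {x | ∀ y, L.mul x y = 0}
  add_mem' := by
    intro a b ha hb
    intro y
    rw [map_add, LinearMap.add_apply, ha y, hb y, add_zero]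
  zero_mem' := by
    intro y
    rw [map_zero, LinearMap.zero_apply]
  smul_mem' := by
    intro c a ha
    intro y
    rw [map_smul, LinearMap.smul_apply, ha y, smul_zero]

/-- `{x : x·a ∈ B for all a ∈ A}`. -/
def transporter (L : SAA F) (A B : Submodule F L.carrier) : Submodule F L.carrier where
  carrier := {x | ∀ a ∈ A, L.mul x a ∈ B}
  add_mem' := by
    intro u v hu hv a ha
    rw [map_add, LinearMap.add_apply]
    exact B.add_mem (hu a ha) (hv a ha)
  zero_mem' := by
    intro a ha
    rw [map_zero, LinearMap.zero_apply]
    exact B.zero_mem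
  smul_mem' := by
    intro c u hu a ha
    rw [map_smul, LinearMap.smul_apply]
    exact B.smul_mem c (hu a ha)

/-- `L` is nilpotent if some power vanishes. -/
def IsNilpotentAlg (L : SAA F) : Prop := ∃ n, L.pow n = ⊥

/-- `L` is nilpotent of class `k` if `L^{k+1} = 0` and `L^k ≠ 0`. -/
def IsClass (L : SAA F) (k : ℕ) : Prop := L.pow (k + 1) = ⊥ ∧ L.pow k ≠ ⊥

/-- A subspace is isotropic if the form vanishes identically on it. -/
def IsIsotropic (L : SAA F) (U : Submodule F L.carrier) : Prop :=
  ∀ u ∈ U, ∀ v ∈ U, L.form u v = 0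

/-- A standard basis `x₁,y₁,…,x₅,y₅` (indexed by `Fin 5 ⊕ Fin 5`, with `Sum.inl i` the
vector `x_{i+1}` and `Sum.inr i` the vector `y_{i+1}`): a basis with
`(xᵢ,xⱼ) = (yᵢ,yⱼ) = 0` and `(xᵢ,yⱼ) = δᵢⱼ`. -/
def IsStandardBasis (L : SAA F) (b : Fin 5 ⊕ Fin 5 → L.carrier) : Prop :=
  LinearIndependent F b ∧ Submodule.span F (Set.range b) = ⊤ ∧
    (∀ i j, L.form (b (Sum.inl i)) (b (Sum.inl j)) = 0) ∧
    (∀ i j, L.form (b (Sum.inr i)) (b (Sum.inr j)) = 0) ∧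
    (∀ i j : Fin 5, L.form (b (Sum.inl i)) (b (Sum.inr j)) = if i = j then 1 else 0)

/-- A presentation: a list of triples of basis indices together with the prescribed
value of the triple form on them. -/
abbrev Pres (F : Type u) : Type u :=
  List ((Fin 5 ⊕ Fin 5) × (Fin 5 ⊕ Fin 5) × (Fin 5 ⊕ Fin 5) × F)

/-- The alternating trilinear form `T(u,v,w) = (u·v, w)`. -/
def triple (L : SAA F) (u v w : L.carrier) : F := L.form (L.mul u v) w

/-- The index of the basis vector `x_{i+1}`. -/
def xi (i : Fin 5) : Fin 5 ⊕ Fin 5 := Sum.inl i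

/-- The index of the basis vector `y_{i+1}`. -/
def yi (i : Fin 5) : Fin 5 ⊕ Fin 5 := Sum.inr i

/-- `b` is a standard basis realizing the presentation `P`: the triple form takes the
listed values on the listed triples of basis vectors and vanishes on every triple of
basis vectors which is not a permutation of a listed triple. -/
def IsPresBasis (L : SAA F) (b : Fin 5 ⊕ Fin 5 → L.carrier) (P : Pres F) : Prop :=
  L.IsStandardBasis b ∧
    (∀ e ∈ P, L.triple (b e.1) (b e.2.1) (b e.2.2.1) = e.2.2.2) ∧
    (∀ i j k : Fin 5 ⊕ Fin 5,
      (∀ e ∈ P, ({i, j, k} : Multiset (Fin 5 ⊕ Fin 5)) ≠ {e.1, e.2.1, e.2.2.1}) →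
      L.triple (b i) (b j) (b k) = 0)

/-- `L` has the presentation `P` (with respect to some standard basis). -/
def HasPres (L : SAA F) (P : Pres F) : Prop := ∃ b, L.IsPresBasis b P

/-- Isomorphism of symplectic alternating algebras: a linear equivalence preserving
the form and the product. -/
def Iso (L M : SAA F) : Prop :=
  ∃ e : L.carrier ≃ₗ[F] M.carrier,
    (∀ u v, M.form (e u) (e v) = L.form u v) ∧
    (∀ u v, e (L.mul u v) = M.mul (e u) (e v))

/-- The alternating form `φ_z̄` induced on `L/L²` by `z ∈ L²` (given by
`φ_z̄(ū,v̄) = (z·u, v)`) is degenerate: some `u ∉ L²` lies in its radical. -/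
def PhiDegen (L : SAA F) (z : L.carrier) : Prop :=
  ∃ u, u ∉ L.pow 2 ∧ ∀ v, L.form (L.mul z u) v = 0

/-- Type A: there is a basis `z̄, t̄` of `L²/Z(L)` with both `φ_z̄` and `φ_t̄` degenerate. -/
def TypeA (L : SAA F) : Prop :=
  ∃ z t, z ∈ L.pow 2 ∧ t ∈ L.pow 2 ∧
    (∀ a b : F, a • z + b • t ∈ L.centre → a = 0 ∧ b = 0) ∧
    Submodule.span F {z, t} ⊔ L.centre = L.pow 2 ∧
    L.PhiDegen z ∧ L.PhiDegen t

/-- Type B: there is `0 ≠ z̄ ∈ L²/Z(L)` with `φ_z̄` degenerate, while `φ_t̄` is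
nondegenerate for every `t̄ ∉ F z̄`. -/
def TypeB (L : SAA F) : Prop :=
  ∃ z, z ∈ L.pow 2 ∧ z ∉ L.centre ∧ L.PhiDegen z ∧
    ∀ t ∈ L.pow 2, (¬∃ a : F, t - a • z ∈ L.centre) → ¬L.PhiDegen t

/-- Type C: `φ_z̄` is nondegenerate for every `0 ≠ z̄ ∈ L²/Z(L)`. -/
def TypeC (L : SAA F) : Prop :=
  ∀ z ∈ L.pow 2, z ∉ L.centre → ¬L.PhiDegen z

/-- `L` is a nilpotent SAA of dimension 10 whose centre is isotropic of dimension 4. -/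
def Cond4 (L : SAA F) : Prop :=
  L.IsNilpotentAlg ∧ Module.finrank F L.carrier = 10 ∧
    L.IsIsotropic L.centre ∧ Module.finrank F ↥L.centre = 4

/-- `L` is a nilpotent SAA of dimension 10, centre isotropic of dimension 4,
`L³ = Z(L)`, of type C. -/
def Cond4C (L : SAA F) : Prop := Cond4 L ∧ L.pow 3 = L.centre ∧ L.TypeC

/-- `L` is a SAA of dimension 10 with isotropic centre of dimension 2, nilpotent of
class `k`. -/
def Cond2 (L : SAA F) (k : ℕ) : Prop :=
  Module.finrank F L.carrier = 10 ∧ L.IsIsotropic L.centre ∧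
    Module.finrank F ↥L.centre = 2 ∧ L.IsClass k

/-- The characteristic subspace `U = {x ∈ L⁴ : x·L³ ⊆ L⁵·L²}`. -/
def Usub (L : SAA F) : Submodule F L.carrier :=
  L.pow 4 ⊓ L.transporter (L.pow 3) (L.prodSpace (L.pow 5) (L.pow 2))

end SAA

namespace SAA

variable (F : Type u) [Field F]

/-- Presentation `𝒫₁₀^{(4,1)}`: `(y₂y₃,y₄)=1, (y₁y₄,y₅)=1, (x₁y₃,y₅)=1`. -/
def P41 : Pres F := [(yi 1, yi 2, yi 3, 1), (yi 0, yi 3, yi 4, 1), (xi 0, yi 2, yi 4, 1)]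

/-- Presentation `𝒫₁₀^{(4,2)}`: `(x₁y₂,y₃)=1, (y₁y₄,y₅)=1`. -/
def P42 : Pres F := [(xi 0, yi 1, yi 2, 1), (yi 0, yi 3, yi 4, 1)]

/-- Presentation `𝒫₁₀^{(4,3)}`: `(x₁y₂,y₃)=1, (y₁y₂,y₄)=1, (y₁y₃,y₅)=1`. -/
def P43 : Pres F := [(xi 0, yi 1, yi 2, 1), (yi 0, yi 1, yi 3, 1), (yi 0, yi 2, yi 4, 1)]

/-- Presentation `𝒫₁₀^{(4,4)}(α,β)`:
`(x₁y₂,y₃)=1, (x₁y₃,y₄)=α, (x₁y₄,y₅)=β, (y₁y₂,y₅)=1, (y₁y₃,y₄)=1`. -/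
def P44 (α β : F) : Pres F :=
  [(xi 0, yi 1, yi 2, 1), (xi 0, yi 2, yi 3, α), (xi 0, yi 3, yi 4, β),
   (yi 0, yi 1, yi 4, 1), (yi 0, yi 2, yi 3, 1)]

/-- Presentation `𝒫(β)`: `(x₁y₂,y₃)=1, (x₁y₄,y₅)=β, (y₁y₂,y₅)=1, (y₁y₃,y₄)=1`. -/
def Pbeta (β : F) : Pres F :=
  [(xi 0, yi 1, yi 2, 1), (xi 0, yi 3, yi 4, β), (yi 0, yi 1, yi 4, 1), (yi 0, yi 2, yi 3, 1)]

/-- Presentation `𝒫₁₀^{(2,1)}`: `(x₃y₄,y₅)=1, (x₂y₃,y₅)=1, (x₁y₃,y₄)=1, (y₁y₂,y₅)=1`. -/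
def P21 : Pres F :=
  [(xi 2, yi 3, yi 4, 1), (xi 1, yi 2, yi 4, 1), (xi 0, yi 2, yi 3, 1), (yi 0, yi 1, yi 4, 1)]

/-- Presentation `𝒫₁₀^{(2,2)}(r)`: `(x₃y₄,y₅)=r, (x₂y₃,y₅)=1, (x₁y₃,y₄)=1, (y₁y₂,y₃)=1`. -/
def P22 (r : F) : Pres F :=
  [(xi 2, yi 3, yi 4, r), (xi 1, yi 2, yi 4, 1), (xi 0, yi 2, yi 3, 1), (yi 0, yi 1, yi 2, 1)]

/-- Presentation `𝒫₁₀^{(2,3)}`: `(x₃y₄,y₅)=1, (x₂y₃,y₅)=1, (x₁y₂,y₅)=1, (y₁y₂,y₄)=1`. -/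
def P23 : Pres F :=
  [(xi 2, yi 3, yi 4, 1), (xi 1, yi 2, yi 4, 1), (xi 0, yi 1, yi 4, 1), (yi 0, yi 1, yi 3, 1)]

/-- Presentation `𝒫₁₀^{(2,4)}(r)`:
`(x₃y₄,y₅)=r, (x₂y₃,y₅)=1, (x₁y₂,y₅)=1, (x₁y₃,y₄)=1, (y₁y₂,y₄)=1`. -/
def P24 (r : F) : Pres F :=
  [(xi 2, yi 3, yi 4, r), (xi 1, yi 2, yi 4, 1), (xi 0, yi 1, yi 4, 1),
   (xi 0, yi 2, yi 3, 1), (yi 0, yi 1, yi 3, 1)]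

/-- Presentation `𝒫₁₀^{(2,5)}(r)`: `(x₂y₃,y₅)=r, (x₃y₄,y₅)=1, (x₁y₂,y₅)=1, (y₁y₂,y₃)=1`. -/
def P25 (r : F) : Pres F :=
  [(xi 1, yi 2, yi 4, r), (xi 2, yi 3, yi 4, 1), (xi 0, yi 1, yi 4, 1), (yi 0, yi 1, yi 2, 1)]

/-- Presentation `𝒫₁₀^{(2,6)}(r)`:
`(x₂y₃,y₅)=r, (x₃y₄,y₅)=1, (x₁y₂,y₅)=1, (x₁y₃,y₄)=1, (y₁y₂,y₃)=1`. -/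
def P26 (r : F) : Pres F :=
  [(xi 1, yi 2, yi 4, r), (xi 2, yi 3, yi 4, 1), (xi 0, yi 1, yi 4, 1),
   (xi 0, yi 2, yi 3, 1), (yi 0, yi 1, yi 2, 1)]

/-- Presentation `𝒫₁₀^{(2,7)}`: `(x₂y₃,y₅)=1, (x₃y₄,y₅)=1, (x₁y₂,y₄)=1, (y₁y₂,y₃)=1`. -/
def P27 : Pres F :=
  [(xi 1, yi 2, yi 4, 1), (xi 2, yi 3, yi 4, 1), (xi 0, yi 1, yi 3, 1), (yi 0, yi 1, yi 2, 1)]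

end SAA

section Helpers

open Module Submodule LinearMap

namespace SAA

variable {F : Type u} [Field F] (L : SAA F)

lemma form_skew (a b : L.carrier) : L.form a b = -L.form b a := by
  have h := L.form_alt (a + b)
  simp only [map_add, LinearMap.add_apply, L.form_alt] at h
  have : L.form a b + L.form b a = 0 := by
    have := h
    linear_combination h
  exact eq_neg_of_add_eq_zero_left this

lemma mul_skew (a b : L.carrier) : L.mul a b = -L.mul b a := by
  have h := L.mul_alt (a + b)
  simp only [map_add, LinearMap.add_apply, L.mul_alt] at h
  have : L.mul a b + L.mul b a = 0 := by
    rw [← h]; abel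
  exact eq_neg_of_add_eq_zero_left this

lemma pow_two_eq : L.pow 2 = L.prodSpace ⊤ ⊤ := rfl

lemma pow_three_eq : L.pow 3 = L.prodSpace (L.pow 2) ⊤ := rfl

lemma mul_mem_pow_two (a b : L.carrier) : L.mul a b ∈ L.pow 2 :=
  Submodule.subset_span ⟨a, trivial, b, trivial, rfl⟩

lemma mul_mem_pow_three {a : L.carrier} (ha : a ∈ L.pow 2) (b : L.carrier) :
    L.mul a b ∈ L.pow 3 :=
  Submodule.subset_span ⟨a, ha, b, trivial, rfl⟩

lemma pow_three_le_pow_two : L.pow 3 ≤ L.pow 2 := by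
  rw [pow_three_eq]
  refine Submodule.span_le.2 ?_
  rintro w ⟨a, -, b, -, rfl⟩
  exact L.mul_mem_pow_two a b

/-- `L² ⊥ Z(L)`. -/
lemma form_pow_two_centre {w c : L.carrier} (hw : w ∈ L.pow 2) (hc : c ∈ L.centre) :
    L.form w c = 0 := by
  have hle : L.pow 2 ≤ LinearMap.ker (L.form.flip c) := by
    rw [pow_two_eq]
    refine Submodule.span_le.2 ?_
    rintro x ⟨a, -, b, -, rfl⟩
    simp only [SetLike.mem_coe, LinearMap.mem_ker, LinearMap.flip_apply]
    rw [L.form_symm a b c, L.mul_skew b c, hc b, neg_zero, map_zero,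
      LinearMap.zero_apply]
  simpa using hle hw

lemma form_centre_pow_two {w c : L.carrier} (hw : w ∈ L.pow 2) (hc : c ∈ L.centre) :
    L.form c w = 0 := by
  rw [L.form_skew, L.form_pow_two_centre hw hc, neg_zero]

variable {L} in
/-- In presence of `L³ = Z(L)`, the subalgebra `L²` is abelian. -/
lemma pow_two_abelian (h3 : L.pow 3 = L.centre) {z w : L.carrier}
    (hz : z ∈ L.pow 2) (hw : w ∈ L.pow 2) : L.mul z w = 0 := by
  apply L.form_nondeg
  intro y
  rw [L.form_symm]
  have hmem : L.mul w y ∈ L.centre := h3 ▸ L.mul_mem_pow_three hw y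
  exact L.form_centre_pow_two hz hmem

variable {L} in
lemma mul_right_pow_two_centre (h3 : L.pow 3 = L.centre) (a : L.carrier)
    {b : L.carrier} (hb : b ∈ L.pow 2) : L.mul a b ∈ L.centre := by
  rw [L.mul_skew]
  exact neg_mem (h3 ▸ L.mul_mem_pow_three hb a)

lemma form_isRefl : LinearMap.IsRefl (R := F) L.form := by
  intro x y hxy
  rw [L.form_skew, hxy, neg_zero]

lemma form_nondegenerate : LinearMap.BilinForm.Nondegenerate (L.form) :=
  L.form_isRefl.nondegenerate_iff_separatingLeft.2 fun x hx => L.form_nondeg x hx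

/-- The orthogonal complement of `L²` is the centre. -/
lemma orthogonal_pow_two : LinearMap.BilinForm.orthogonal L.form (L.pow 2) = L.centre := by
  ext x
  rw [LinearMap.BilinForm.mem_orthogonal_iff]
  constructor
  · intro hx y
    apply L.form_nondeg
    intro w
    rw [L.form_symm]
    exact hx _ (L.mul_mem_pow_two y w)
  · intro hx n hn
    exact L.form_pow_two_centre hn hx

variable {L} in
lemma centre_le_pow_two (h3 : L.pow 3 = L.centre) : L.centre ≤ L.pow 2 :=
  h3 ▸ L.pow_three_le_pow_two

lemma triple_diag (z a : L.carrier) : L.form (L.mul z a) a = 0 := by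
  rw [L.form_symm, L.mul_alt, map_zero, LinearMap.zero_apply]

lemma triple_swap (z a b : L.carrier) : L.form (L.mul z a) b = -L.form (L.mul z b) a := by
  have h : L.form (L.mul z (a + b)) (a + b) = 0 := L.triple_diag z (a + b)
  simp only [map_add, LinearMap.add_apply, L.triple_diag] at h
  exact eq_neg_of_add_eq_zero_left (by linear_combination h)

variable {L} in
lemma finDim (hdim : Module.finrank F L.carrier = 10) : FiniteDimensional F L.carrier :=
  Module.finite_of_finrank_pos (by rw [hdim]; norm_num)

variable {L} in
lemma finrank_pow_two (hdim : Module.finrank F L.carrier = 10)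
    (hZ : Module.finrank F ↥L.centre = 4) : Module.finrank F ↥(L.pow 2) = 6 := by
  have : FiniteDimensional F L.carrier := finDim hdim
  have h := LinearMap.BilinForm.finrank_orthogonal (B := L.form)
    L.form_nondegenerate (L.pow 2)
  rw [L.orthogonal_pow_two, hZ, hdim] at h
  have hle : Module.finrank F ↥(L.pow 2) ≤ 10 := hdim ▸ Submodule.finrank_le _
  omega

end SAA

end Helpers

/-- Lemma 2.4. If `L` is a nilpotent SAA of dimension 10 with isotropic
centre of dimension 4, `L³ = Z(L)`, of type C, then through every nonzero vector of
`L/L²` there passes a unique totally isotropic plane (a 2-dimensional subspace of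
`L/L²` which is isotropic for every form `φ_z̄`, `z ∈ L²`). -/
theorem unique_totally_isotropic_plane
    {F : Type u} [Field F] (L : SAA F) (h : L.Cond4C) :
    ∀ u : L.carrier, u ∉ L.pow 2 →
      ∃! P : Submodule F (L.carrier ⧸ L.pow 2),
        Module.finrank F ↥P = 2 ∧ Submodule.Quotient.mk u ∈ P ∧
          ∀ z ∈ L.pow 2, ∀ v w : L.carrier,
            Submodule.Quotient.mk v ∈ P → Submodule.Quotient.mk w ∈ P →
              L.form (L.mul z v) w = 0 := by
  obtain ⟨⟨hnil, hdim, hisoZ, hZ4⟩, h3, hC⟩ := h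
  haveI hFD : FiniteDimensional F L.carrier := SAA.finDim hdim
  have hP2 : Module.finrank F ↥(L.pow 2) = 6 := SAA.finrank_pow_two hdim hZ4
  intro u hu
  classical
  -- The linear map `z ↦ (v ↦ (z·u, v))` on `L²`.
  set g : ↥(L.pow 2) →ₗ[F] Module.Dual F L.carrier :=
    L.form ∘ₗ (L.mul.flip u) ∘ₗ (L.pow 2).subtype with hg
  have hgapply : ∀ (z : ↥(L.pow 2)) (v : L.carrier),
      g z v = L.form (L.mul (z : L.carrier) u) v := fun z v => rfl
  have hker : LinearMap.ker g = Submodule.comap (L.pow 2).subtype L.centre := by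
    ext z
    simp only [LinearMap.mem_ker, Submodule.mem_comap]
    constructor
    · intro hz
      by_contra hzc
      refine hC (z : L.carrier) z.2 hzc ⟨u, hu, fun v => ?_⟩
      have := DFunLike.congr_fun hz v
      rwa [hgapply, LinearMap.zero_apply] at this
    · intro hz
      have hz0 : L.mul (z : L.carrier) u = 0 := hz u
      ext v
      rw [hgapply, LinearMap.zero_apply, hz0, map_zero, LinearMap.zero_apply]
  have hkerdim : Module.finrank F ↥(LinearMap.ker g) = 4 := by
    rw [hker]
    exact (Submodule.comapSubtypeEquivOfLe (SAA.centre_le_pow_two h3)).finrank_eq.trans hZ4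
  have hrange : Module.finrank F ↥(LinearMap.range g) = 2 := by
    have h1 := LinearMap.finrank_range_add_finrank_ker g
    rw [hkerdim, hP2] at h1
    omega
  -- `W'` = the set of `v` with `(z·u, v) = 0` for all `z ∈ L²`.
  set W' : Submodule F L.carrier := (LinearMap.range g).dualCoannihilator with hW'
  have hmemW' : ∀ v : L.carrier,
      v ∈ W' ↔ ∀ z ∈ L.pow 2, L.form (L.mul z u) v = 0 := by
    intro v
    rw [hW', Submodule.mem_dualCoannihilator]
    constructor
    · intro hv z hz
      exact hv _ ⟨⟨z, hz⟩, rfl⟩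
    · rintro hv φ ⟨z, rfl⟩
      exact hv (z : L.carrier) z.2
  have hW'dim : Module.finrank F ↥W' = 8 := by
    have h2 := Subspace.finrank_add_finrank_dualCoannihilator_eq (LinearMap.range g)
    rw [← hW', hrange, hdim] at h2
    omega
  have hpow2_le : L.pow 2 ≤ W' := by
    intro v hv
    rw [hmemW']
    intro z hz
    rw [L.form_symm]
    exact L.form_centre_pow_two hz (SAA.mul_right_pow_two_centre h3 u hv)
  have huW' : u ∈ W' := by
    rw [hmemW']
    intro z hz
    exact L.triple_diag z u
  -- `W` = the image of `W'` in `L/L²`.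
  set W : Submodule F (L.carrier ⧸ L.pow 2) := W'.map (L.pow 2).mkQ with hW
  have hWdim : Module.finrank F ↥W = 2 := by
    set r : ↥W' →ₗ[F] L.carrier ⧸ L.pow 2 := (L.pow 2).mkQ ∘ₗ W'.subtype with hr
    have hrange_r : LinearMap.range r = W := by
      rw [hr, LinearMap.range_comp, Submodule.range_subtype]
    have hker_r : LinearMap.ker r = Submodule.comap W'.subtype (L.pow 2) := by
      rw [hr, LinearMap.ker_comp, Submodule.ker_mkQ]
    have h1 := LinearMap.finrank_range_add_finrank_ker r
    have h2 : Module.finrank F ↥(Submodule.comap W'.subtype (L.pow 2)) = 6 :=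
      (Submodule.comapSubtypeEquivOfLe hpow2_le).finrank_eq.trans hP2
    rw [hrange_r, hker_r, hW'dim, h2] at h1
    omega
  have hmkuW : (Submodule.Quotient.mk u : L.carrier ⧸ L.pow 2) ∈ W :=
    ⟨u, huW', rfl⟩
  have hu0 : (Submodule.Quotient.mk u : L.carrier ⧸ L.pow 2) ≠ 0 := fun h0 =>
    hu ((Submodule.Quotient.mk_eq_zero _).1 h0)
  -- Find a second generator `x` of `W`.
  have hspan_lt : Submodule.span F {(Submodule.Quotient.mk u : L.carrier ⧸ L.pow 2)} < W := by
    refine lt_of_le_of_ne (Submodule.span_le.2 (by simpa using hmkuW)) fun hEq => ?_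
    have h1 := finrank_span_singleton (K := F) hu0
    rw [hEq, hWdim] at h1
    omega
  obtain ⟨x, hxW, hxns⟩ := SetLike.exists_of_lt hspan_lt
  have hWspan : Submodule.span F {(Submodule.Quotient.mk u : L.carrier ⧸ L.pow 2), x} = W := by
    apply Submodule.eq_of_le_of_finrank_le
    · rw [Submodule.span_le, Set.insert_subset_iff, Set.singleton_subset_iff]
      exact ⟨hmkuW, hxW⟩
    · rw [hWdim]
      have hlt2 : Submodule.span F {(Submodule.Quotient.mk u : L.carrier ⧸ L.pow 2)}
          < Submodule.span F {(Submodule.Quotient.mk u : L.carrier ⧸ L.pow 2), x} := by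
        refine lt_of_le_of_ne (Submodule.span_mono (by simp)) fun hEq => hxns ?_
        rw [hEq]
        exact Submodule.subset_span (by simp)
      have h1 := Submodule.finrank_lt_finrank_of_lt hlt2
      rw [finrank_span_singleton hu0] at h1
      omega
  obtain ⟨x', hx'W', hx'⟩ := hxW
  -- `W` is totally isotropic.
  have hiso_aux : ∀ z ∈ L.pow 2, ∀ v w : L.carrier,
      Submodule.Quotient.mk v ∈ W → Submodule.Quotient.mk w ∈ W →
        L.form (L.mul z v) w = 0 := by
    intro z hz v w hv hw
    rw [← hWspan] at hv hw
    obtain ⟨a, b, hab⟩ := Submodule.mem_span_pair.1 hv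
    obtain ⟨c, d, hcd⟩ := Submodule.mem_span_pair.1 hw
    have hp : v - (a • u + b • x') ∈ L.pow 2 := by
      rw [← Submodule.Quotient.mk_eq_zero (L.pow 2)]
      have e1 : (Submodule.Quotient.mk (v - (a • u + b • x')) : L.carrier ⧸ L.pow 2)
          = Submodule.Quotient.mk v -
              (a • (Submodule.Quotient.mk u : L.carrier ⧸ L.pow 2) + b • x) := by
        rw [← hx']
        simp only [Submodule.Quotient.mk_sub, Submodule.Quotient.mk_add,
          Submodule.Quotient.mk_smul]
        rfl
      rw [e1, hab, sub_self]
    have hq : w - (c • u + d • x') ∈ L.pow 2 := by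
      rw [← Submodule.Quotient.mk_eq_zero (L.pow 2)]
      have e1 : (Submodule.Quotient.mk (w - (c • u + d • x')) : L.carrier ⧸ L.pow 2)
          = Submodule.Quotient.mk w -
              (c • (Submodule.Quotient.mk u : L.carrier ⧸ L.pow 2) + d • x) := by
        rw [← hx']
        simp only [Submodule.Quotient.mk_sub, Submodule.Quotient.mk_add,
          Submodule.Quotient.mk_smul]
        rfl
      rw [e1, hcd, sub_self]
    obtain ⟨p, hpmem, hveq⟩ : ∃ p ∈ L.pow 2, v = a • u + b • x' + p :=
      ⟨_, hp, by abel⟩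
    obtain ⟨q, hqmem, hweq⟩ : ∃ q ∈ L.pow 2, w = c • u + d • x' + q :=
      ⟨_, hq, by abel⟩
    have t2 : L.form (L.mul z u) x' = 0 := (hmemW' x').1 hx'W' z hz
    have t3 : L.form (L.mul z x') u = 0 := by rw [L.triple_swap, t2, neg_zero]
    have t5 : ∀ s : L.carrier, L.form (L.mul z s) q = 0 := by
      intro s
      rw [L.form_symm]
      exact L.form_centre_pow_two hz (SAA.mul_right_pow_two_centre h3 s hqmem)
    have t7 : L.mul z p = 0 := SAA.pow_two_abelian h3 hz hpmem
    rw [hveq, hweq]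
    simp [map_add, map_smul, LinearMap.add_apply, LinearMap.smul_apply,
      L.triple_diag, t2, t3, t5, t7]
  refine ⟨W, ⟨hWdim, hmkuW, hiso_aux⟩, ?_⟩
  rintro P ⟨hPdim, huP, hPiso⟩
  apply Submodule.eq_of_le_of_finrank_le
  · intro y hy
    obtain ⟨v, rfl⟩ := Submodule.Quotient.mk_surjective (L.pow 2) y
    have hvW' : v ∈ W' := (hmemW' v).2 fun z hz => hPiso z hz u v huP hy
    exact ⟨v, hvW', rfl⟩
  · rw [hWdim, hPdim]
end

section
/- Let F be a field of characteristic 2 and let L be a nilpotent symplectic alternating algebra of dimension 10 over F whose centre Z(L) is isotropic of dimension 4, with L³ = Z(L), of type C. Then L cannot have both a presentation of the form 𝒫₁₀^{(4,4)}(0,β) and a presentation of the form 𝒫₁₀^{(4,4)}(α,γ) with α ≠ 0, where t² + β and t² + αt + γ are irreducible polynomials in F[t]. -/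
universe u

namespace SAAProofAux

open SAA

variable {F : Type u} [Field F]

abbrev Idx := Fin 5 ⊕ Fin 5

section Basic
variable (L : SAA F)

lemma form_anti (u v : L.carrier) : L.form u v = - L.form v u := by
  have h := L.form_alt (u + v)
  simp only [map_add, LinearMap.add_apply, L.form_alt u, L.form_alt v, zero_add, add_zero] at h
  linear_combination h

lemma tri_self (z u : L.carrier) : L.form (L.mul z u) u = 0 := by
  rw [L.form_symm, L.mul_alt, map_zero, LinearMap.zero_apply]

lemma tri_swap (z u v : L.carrier) :
    L.form (L.mul z u) v = - L.form (L.mul z v) u := by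
  have h := tri_self L z (u + v)
  simp only [map_add, LinearMap.add_apply, tri_self L z u, tri_self L z v, zero_add, add_zero] at h
  linear_combination h

end Basic

/-- The list of index-multisets of the triples occurring in `P44`. -/
def LMs : List (Multiset Idx) :=
  [{Sum.inl 0, Sum.inr 1, Sum.inr 2}, {Sum.inl 0, Sum.inr 2, Sum.inr 3},
   {Sum.inl 0, Sum.inr 3, Sum.inr 4}, {Sum.inr 0, Sum.inr 1, Sum.inr 4},
   {Sum.inr 0, Sum.inr 2, Sum.inr 3}]

lemma P44_mem_idx (α β : F) (e : (Fin 5 ⊕ Fin 5) × (Fin 5 ⊕ Fin 5) × (Fin 5 ⊕ Fin 5) × F)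
    (he : e ∈ P44 F α β) : ({e.1, e.2.1, e.2.2.1} : Multiset Idx) ∈ LMs := by
  simp only [P44, List.mem_cons, List.not_mem_nil, or_false] at he
  rcases he with rfl | rfl | rfl | rfl | rfl <;> simp only [SAA.xi, SAA.yi] <;> decide

variable {L : SAA F} {b : Idx → L.carrier}

lemma vanish {α β : F} (hb : L.IsPresBasis b (P44 F α β)) (p q r : Idx)
    (h : ({p, q, r} : Multiset Idx) ∉ LMs) :
    L.form (L.mul (b p) (b q)) (b r) = 0 :=
  hb.2.2 p q r fun e he heq => h (by rw [heq]; exact P44_mem_idx α β e he)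

lemma Aval (hb : L.IsStandardBasis b) (j : Fin 5) (s : Idx) :
    L.form (b (Sum.inl j)) (b s) = if s = Sum.inr j then 1 else 0 := by
  rcases s with k | k
  · simp [hb.2.2.1 j k]
  · rw [hb.2.2.2.2 j k]
    by_cases h : j = k
    · subst h; simp
    · simp [h, Ne.symm h]

lemma Yval (hb : L.IsStandardBasis b) (j : Fin 5) (s : Idx) :
    L.form (b (Sum.inr j)) (b s) = if s = Sum.inl j then -1 else 0 := by
  rw [form_anti]
  rcases s with k | k
  · rw [hb.2.2.2.2 k j]
    by_cases h : k = j
    · subst h; simp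
    · simp [h, fun hh => h (Sum.inl.inj hh)]
  · simp [hb.2.2.2.1 k j]

end SAAProofAux
namespace SAAProofAux

open SAA
variable {F : Type u} [Field F]

/-- The bilinear form `φ_{x₁}` expressed through coordinate functionals. -/
def phiX (L : SAA F) (b : Idx → L.carrier) (β : F) (u v : L.carrier) : F :=
  L.form (b (Sum.inl 1)) u * L.form (b (Sum.inl 2)) v
    - L.form (b (Sum.inl 2)) u * L.form (b (Sum.inl 1)) v
    + β * (L.form (b (Sum.inl 3)) u * L.form (b (Sum.inl 4)) v
      - L.form (b (Sum.inl 4)) u * L.form (b (Sum.inl 3)) v)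

/-- The bilinear form `φ_{y₁}` expressed through coordinate functionals. -/
def phiY (L : SAA F) (b : Idx → L.carrier) (u v : L.carrier) : F :=
  L.form (b (Sum.inl 1)) u * L.form (b (Sum.inl 4)) v
    - L.form (b (Sum.inl 4)) u * L.form (b (Sum.inl 1)) v
    + (L.form (b (Sum.inl 2)) u * L.form (b (Sum.inl 3)) v
      - L.form (b (Sum.inl 3)) u * L.form (b (Sum.inl 2)) v)

variable (L : SAA F) (b : Idx → L.carrier) (β : F)

/-- `phiX` as a bilinear map. -/
def phiXmap : L.carrier →ₗ[F] L.carrier →ₗ[F] F :=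
  LinearMap.mk₂ F (phiX L b β)
    (fun u₁ u₂ v => by simp only [phiX, map_add]; ring)
    (fun s u v => by simp only [phiX, map_smul, smul_eq_mul]; ring)
    (fun u v₁ v₂ => by simp only [phiX, map_add]; ring)
    (fun s u v => by simp only [phiX, map_smul, smul_eq_mul]; ring)

/-- `phiY` as a bilinear map. -/
def phiYmap : L.carrier →ₗ[F] L.carrier →ₗ[F] F :=
  LinearMap.mk₂ F (phiY L b)
    (fun u₁ u₂ v => by simp only [phiY, map_add]; ring)
    (fun s u v => by simp only [phiY, map_smul, smul_eq_mul]; ring)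
    (fun u v₁ v₂ => by simp only [phiY, map_add]; ring)
    (fun s u v => by simp only [phiY, map_smul, smul_eq_mul]; ring)

end SAAProofAux
namespace SAAProofAux

open SAA
variable {F : Type u} [Field F] {L : SAA F} {b : Idx → L.carrier}

lemma notmem_x (k : Fin 5) (hk : k ≠ 0) (p q : Idx) :
    ({Sum.inl k, p, q} : Multiset Idx) ∉ LMs := by
  revert hk p q
  revert k
  decide

lemma xk_rep {α β : F} (hb : L.IsPresBasis b (P44 F α β)) (k : Fin 5) (hk : k ≠ 0)
    (u v : L.carrier) : L.form (L.mul (b (Sum.inl k)) u) v = 0 := by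
  have key : LinearMap.comp L.form (L.mul (b (Sum.inl k))) = 0 := by
    refine (Module.Basis.mk hb.1.1 hb.1.2.1.ge).ext fun p => (Module.Basis.mk hb.1.1 hb.1.2.1.ge).ext fun q => ?_
    simp only [Module.Basis.mk_apply, LinearMap.comp_apply, LinearMap.zero_apply]
    exact vanish hb _ p q (notmem_x k hk p q)
  have h1 := LinearMap.congr_fun key u
  have h2 := LinearMap.congr_fun h1 v
  simpa using h2

end SAAProofAux
namespace SAAProofAux
open SAA

variable {F : Type u} [Field F] {L : SAA F} {b : Idx → L.carrier}

set_option maxHeartbeats 2000000 in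
lemma phiX_rep {β : F} (hb : L.IsPresBasis b (P44 F 0 β)) (u v : L.carrier) :
    L.form (L.mul (b (Sum.inl 0)) u) v = phiX L b β u v := by
  have hvan : ∀ p q r : Idx, ({p, q, r} : Multiset Idx) ∉ LMs →
      L.form (L.mul (b p) (b q)) (b r) = 0 := vanish hb
  have e1 : L.form (L.mul (b (Sum.inl 0)) (b (Sum.inr 1)))
      (b (Sum.inr 2)) = 1 :=
    hb.2.1 (xi 0, yi 1, yi 2, 1) (by simp [P44])
  have e2 : L.form (L.mul (b (Sum.inl 0)) (b (Sum.inr 2)))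
      (b (Sum.inr 3)) = 0 :=
    hb.2.1 (xi 0, yi 2, yi 3, 0) (by simp [P44])
  have e3 : L.form (L.mul (b (Sum.inl 0)) (b (Sum.inr 3)))
      (b (Sum.inr 4)) = β :=
    hb.2.1 (xi 0, yi 3, yi 4, β) (by simp [P44])
  have s1 : L.form (L.mul (b (Sum.inl 0)) (b (Sum.inr 2)))
      (b (Sum.inr 1)) = -1 := by
    rw [tri_swap, e1]
  have s2 : L.form (L.mul (b (Sum.inl 0)) (b (Sum.inr 3)))
      (b (Sum.inr 2)) = 0 := by
    rw [tri_swap, e2, neg_zero]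
  have s3 : L.form (L.mul (b (Sum.inl 0)) (b (Sum.inr 4)))
      (b (Sum.inr 3)) = -β := by
    rw [tri_swap, e3]
  have key : LinearMap.comp L.form (L.mul (b (Sum.inl 0))) = phiXmap L b β := by
    refine (Module.Basis.mk hb.1.1 hb.1.2.1.ge).ext fun p => (Module.Basis.mk hb.1.1 hb.1.2.1.ge).ext fun q => ?_
    simp only [Module.Basis.mk_apply, LinearMap.comp_apply, phiXmap, LinearMap.mk₂_apply]
    rcases p with p | p <;> rcases q with q | q <;> fin_cases p <;> fin_cases q <;>
      simp (config := { decide := true }) only [Fin.reduceFinMk, phiX, Aval hb.1, e1, e2, e3, s1, s2,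
        s3, Sum.inr.injEq, Sum.inl.injEq, reduceCtorEq, Fin.reduceEq, if_true, if_false,
        reduceIte, mul_zero, zero_mul, mul_one, one_mul, sub_zero, zero_sub, add_zero, zero_add,
        neg_zero, mul_neg, neg_neg, sub_self] <;>
      first
      | rfl
      | (refine hvan _ _ _ ?_; decide)
  have h1 := LinearMap.congr_fun key u
  have h2 := LinearMap.congr_fun h1 v
  simpa [phiXmap] using h2

end SAAProofAux
namespace SAAProofAux
open SAA

variable {F : Type u} [Field F] {L : SAA F} {b : Idx → L.carrier}

set_option maxHeartbeats 2000000 in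
lemma phiY_rep {β : F} (hb : L.IsPresBasis b (P44 F 0 β)) (u v : L.carrier) :
    L.form (L.mul (b (Sum.inr 0)) u) v = phiY L b u v := by
  have hvan : ∀ p q r : Idx, ({p, q, r} : Multiset Idx) ∉ LMs →
      L.form (L.mul (b p) (b q)) (b r) = 0 := vanish hb
  have e4 : L.form (L.mul (b (Sum.inr 0)) (b (Sum.inr 1))) (b (Sum.inr 4)) = 1 :=
    hb.2.1 (yi 0, yi 1, yi 4, 1) (by simp [P44])
  have e5 : L.form (L.mul (b (Sum.inr 0)) (b (Sum.inr 2))) (b (Sum.inr 3)) = 1 :=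
    hb.2.1 (yi 0, yi 2, yi 3, 1) (by simp [P44])
  have s4 : L.form (L.mul (b (Sum.inr 0)) (b (Sum.inr 4))) (b (Sum.inr 1)) = -1 := by
    rw [tri_swap, e4]
  have s5 : L.form (L.mul (b (Sum.inr 0)) (b (Sum.inr 3))) (b (Sum.inr 2)) = -1 := by
    rw [tri_swap, e5]
  have key : LinearMap.comp L.form (L.mul (b (Sum.inr 0))) = phiYmap L b := by
    refine (Module.Basis.mk hb.1.1 hb.1.2.1.ge).ext fun p => (Module.Basis.mk hb.1.1 hb.1.2.1.ge).ext fun q => ?_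
    simp only [Module.Basis.mk_apply, LinearMap.comp_apply, phiYmap, LinearMap.mk₂_apply]
    rcases p with p | p <;> rcases q with q | q <;> fin_cases p <;> fin_cases q <;>
      simp (config := { decide := true }) only [Fin.reduceFinMk, phiY, Aval hb.1, e4, e5, s4,
        s5, Sum.inr.injEq, Sum.inl.injEq, reduceCtorEq, Fin.reduceEq, if_true, if_false,
        reduceIte, mul_zero, zero_mul, mul_one, one_mul, sub_zero, zero_sub, add_zero, zero_add,
        neg_zero, mul_neg, neg_neg, sub_self] <;>
      first
      | rfl
      | (refine hvan _ _ _ ?_; decide)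
  have h2 := LinearMap.congr_fun (LinearMap.congr_fun key u) v
  simpa [phiYmap] using h2

end SAAProofAux
namespace SAAProofAux
open SAA

variable {F : Type u} [Field F] {L : SAA F} {b : Idx → L.carrier}

lemma pow2_coeff {α β : F} (hb : L.IsPresBasis b (P44 F α β)) {z : L.carrier}
    (hz : z ∈ L.pow 2) (m : Fin 5) (hm : m ≠ 0) : L.form (b (Sum.inl m)) z = 0 := by
  have hz' : z ∈ Submodule.span F
      {w | ∃ u ∈ (⊤ : Submodule F L.carrier), ∃ v ∈ (⊤ : Submodule F L.carrier), L.mul u v = w} :=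
    hz
  have hle : Submodule.span F
      {w | ∃ u ∈ (⊤ : Submodule F L.carrier), ∃ v ∈ (⊤ : Submodule F L.carrier), L.mul u v = w}
      ≤ LinearMap.ker (L.form (b (Sum.inl m))) := by
    rw [Submodule.span_le]
    rintro w ⟨x, -, y, -, rfl⟩
    simp only [SetLike.mem_coe, LinearMap.mem_ker]
    rw [form_anti, L.form_symm, L.form_symm, xk_rep hb m hm, neg_zero]
  exact LinearMap.mem_ker.mp (hle hz')

lemma good {β : F} (hb : L.IsPresBasis b (P44 F 0 β)) {z : L.carrier} (hz : z ∈ L.pow 2) :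
    ∃ a d : F, ∀ u v : L.carrier,
      L.form (L.mul z u) v = a * phiX L b β u v + d * phiY L b u v := by
  classical
  let B : Module.Basis Idx F L.carrier := Module.Basis.mk hb.1.1 hb.1.2.1.ge
  have hrepr : ∀ (w : L.carrier) (m : Fin 5), L.form (b (Sum.inl m)) w = B.repr w (Sum.inr m) := by
    intro w m
    conv_lhs => rw [← B.sum_repr w]
    simp [B, map_sum, map_smul, smul_eq_mul, Module.Basis.mk_apply, Aval hb.1, mul_ite, mul_one,
      mul_zero, Finset.sum_ite_eq']
  refine ⟨B.repr z (Sum.inl 0), B.repr z (Sum.inr 0), fun u v => ?_⟩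
  have expand : L.form (L.mul (∑ i : Idx, B.repr z i • B i) u) v
      = ∑ i : Idx, B.repr z i * L.form (L.mul (B i) u) v := by
    rw [map_sum, LinearMap.sum_apply, map_sum, LinearMap.sum_apply]
    refine Finset.sum_congr rfl fun i _ => ?_
    simp [map_smul, smul_eq_mul]
  conv_lhs => rw [← B.sum_repr z]
  rw [expand, Fintype.sum_sum_type, Fin.sum_univ_five, Fin.sum_univ_five]
  have hB : ∀ i : Idx, B i = b i := fun i => Module.Basis.mk_apply _ _ i
  rw [hB, hB, hB, hB, hB, hB, hB, hB, hB, hB]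
  rw [phiX_rep hb, phiY_rep hb,
    xk_rep hb 1 (by decide), xk_rep hb 2 (by decide),
    xk_rep hb 3 (by decide), xk_rep hb 4 (by decide)]
  have k1 : B.repr z (Sum.inr 1) = 0 := by rw [← hrepr]; exact pow2_coeff hb hz 1 (by decide)
  have k2 : B.repr z (Sum.inr 2) = 0 := by rw [← hrepr]; exact pow2_coeff hb hz 2 (by decide)
  have k3 : B.repr z (Sum.inr 3) = 0 := by rw [← hrepr]; exact pow2_coeff hb hz 3 (by decide)
  have k4 : B.repr z (Sum.inr 4) = 0 := by rw [← hrepr]; exact pow2_coeff hb hz 4 (by decide)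
  rw [k1, k2, k3, k4]
  ring

end SAAProofAux

open SAAProofAux in
set_option linter.unusedVariables false in
/-- Lemma 2.9. Over a field of characteristic 2, a nilpotent SAA of
dimension 10 with isotropic centre of dimension 4, `L³ = Z(L)`, of type C cannot have
both a presentation `𝒫₁₀^{(4,4)}(0,β)` and a presentation `𝒫₁₀^{(4,4)}(α,γ)` with
`α ≠ 0`, where `t² + β` and `t² + αt + γ` are irreducible. -/
theorem not_both_presentations_char_two
    {F : Type u} [Field F] (hchar : (2 : F) = 0) (L : SAA F) (h : L.Cond4C) :
    ¬((∃ β : F, Irreducible (Polynomial.X ^ 2 + Polynomial.C β) ∧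
          L.HasPres (SAA.P44 F 0 β)) ∧
      (∃ α γ : F, α ≠ 0 ∧
          Irreducible (Polynomial.X ^ 2 + Polynomial.C α * Polynomial.X + Polynomial.C γ) ∧
          L.HasPres (SAA.P44 F α γ))) := by
  rintro ⟨⟨β, -, bb, hb⟩, α, γ, hα, -, cc, hc⟩
  refine hα ?_
  -- clause values for the presentation `P44 α γ` w.r.t. the basis `cc`
  have w1c : L.form (L.mul (cc (Sum.inl 0)) (cc (Sum.inr 1))) (cc (Sum.inr 2)) = 1 :=
    hc.2.1 (SAA.xi 0, SAA.yi 1, SAA.yi 2, 1) (by simp [SAA.P44])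
  have w2c : L.form (L.mul (cc (Sum.inl 0)) (cc (Sum.inr 2))) (cc (Sum.inr 3)) = α :=
    hc.2.1 (SAA.xi 0, SAA.yi 2, SAA.yi 3, α) (by simp [SAA.P44])
  have w3c : L.form (L.mul (cc (Sum.inl 0)) (cc (Sum.inr 3))) (cc (Sum.inr 4)) = γ :=
    hc.2.1 (SAA.xi 0, SAA.yi 3, SAA.yi 4, γ) (by simp [SAA.P44])
  have w4c : L.form (L.mul (cc (Sum.inr 0)) (cc (Sum.inr 1))) (cc (Sum.inr 4)) = 1 :=
    hc.2.1 (SAA.yi 0, SAA.yi 1, SAA.yi 4, 1) (by simp [SAA.P44])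
  have w5c : L.form (L.mul (cc (Sum.inr 0)) (cc (Sum.inr 2))) (cc (Sum.inr 3)) = 1 :=
    hc.2.1 (SAA.yi 0, SAA.yi 2, SAA.yi 3, 1) (by simp [SAA.P44])
  have z1 : L.form (L.mul (cc (Sum.inr 0)) (cc (Sum.inr 3))) (cc (Sum.inr 4)) = 0 :=
    vanish hc (Sum.inr 0) (Sum.inr 3) (Sum.inr 4) (by decide)
  have z2 : L.form (L.mul (cc (Sum.inl 0)) (cc (Sum.inr 1))) (cc (Sum.inr 3)) = 0 :=
    vanish hc (Sum.inl 0) (Sum.inr 1) (Sum.inr 3) (by decide)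
  have z3 : L.form (L.mul (cc (Sum.inr 0)) (cc (Sum.inr 2))) (cc (Sum.inr 4)) = 0 :=
    vanish hc (Sum.inr 0) (Sum.inr 2) (Sum.inr 4) (by decide)
  have z4 : L.form (L.mul (cc (Sum.inl 0)) (cc (Sum.inr 1))) (cc (Sum.inr 4)) = 0 :=
    vanish hc (Sum.inl 0) (Sum.inr 1) (Sum.inr 4) (by decide)
  have z5 : L.form (L.mul (cc (Sum.inl 0)) (cc (Sum.inr 2))) (cc (Sum.inr 4)) = 0 :=
    vanish hc (Sum.inl 0) (Sum.inr 2) (Sum.inr 4) (by decide)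
  have z6 : L.form (L.mul (cc (Sum.inr 0)) (cc (Sum.inr 1))) (cc (Sum.inr 2)) = 0 :=
    vanish hc (Sum.inr 0) (Sum.inr 1) (Sum.inr 2) (by decide)
  have z7 : L.form (L.mul (cc (Sum.inr 0)) (cc (Sum.inr 1))) (cc (Sum.inr 3)) = 0 :=
    vanish hc (Sum.inr 0) (Sum.inr 1) (Sum.inr 3) (by decide)
  -- `x₁` and `y₁` of the second presentation lie in `L²`
  have hmulz : L.mul (cc (Sum.inr 1)) (cc (Sum.inr 4)) = cc (Sum.inl 0) := by
    have hker : L.form (L.mul (cc (Sum.inr 1)) (cc (Sum.inr 4)) - cc (Sum.inl 0)) = 0 := by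
      apply LinearMap.ext_on hc.1.2.1
      rintro x ⟨r, rfl⟩
      rw [map_sub, LinearMap.sub_apply, LinearMap.zero_apply]
      have hcyc : L.form (L.mul (cc (Sum.inr 1)) (cc (Sum.inr 4))) (cc r)
          = L.form (L.mul (cc r) (cc (Sum.inr 1))) (cc (Sum.inr 4)) := by
        rw [L.form_symm, L.form_symm]
      rw [hcyc]
      rcases r with r | r <;> fin_cases r <;>
        simp (config := { decide := true }) only [Fin.reduceFinMk, w4c, Aval hc.1,
          Sum.inr.injEq, Sum.inl.injEq, reduceCtorEq, Fin.reduceEq, if_true, if_false,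
          reduceIte, sub_zero, sub_self] <;>
        (refine vanish hc _ _ _ ?_ ; decide)
    have h0 : L.mul (cc (Sum.inr 1)) (cc (Sum.inr 4)) - cc (Sum.inl 0) = 0 :=
      L.form_nondeg _ fun y => by rw [hker]; simp
    exact sub_eq_zero.mp h0
  have hmulw : L.mul (cc (Sum.inr 1)) (cc (Sum.inr 2)) + cc (Sum.inr 0) = 0 := by
    have hker : L.form (L.mul (cc (Sum.inr 1)) (cc (Sum.inr 2)) + cc (Sum.inr 0)) = 0 := by
      apply LinearMap.ext_on hc.1.2.1
      rintro x ⟨r, rfl⟩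
      rw [map_add, LinearMap.add_apply, LinearMap.zero_apply]
      have hcyc : L.form (L.mul (cc (Sum.inr 1)) (cc (Sum.inr 2))) (cc r)
          = L.form (L.mul (cc r) (cc (Sum.inr 1))) (cc (Sum.inr 2)) := by
        rw [L.form_symm, L.form_symm]
      rw [hcyc]
      rcases r with r | r <;> fin_cases r <;>
        simp (config := { decide := true }) only [Fin.reduceFinMk, w1c, Yval hc.1,
          Sum.inr.injEq, Sum.inl.injEq, reduceCtorEq, Fin.reduceEq, if_true, if_false,
          reduceIte, add_zero, add_neg_cancel] <;>
        (refine vanish hc _ _ _ ?_ ; decide)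
    exact L.form_nondeg _ fun y => by rw [hker]; simp
  have hz2 : cc (Sum.inl 0) ∈ L.pow 2 := by
    rw [← hmulz]
    exact Submodule.subset_span ⟨_, Submodule.mem_top, _, Submodule.mem_top, rfl⟩
  have hw2 : cc (Sum.inr 0) ∈ L.pow 2 := by
    have hcc : cc (Sum.inr 0) = - L.mul (cc (Sum.inr 1)) (cc (Sum.inr 2)) :=
      eq_neg_of_add_eq_zero_right hmulw
    rw [hcc]
    exact Submodule.neg_mem _
      (Submodule.subset_span ⟨_, Submodule.mem_top, _, Submodule.mem_top, rfl⟩)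
  obtain ⟨a, d, hgz⟩ := good hb hz2
  obtain ⟨a', d', hgw⟩ := good hb hw2
  have hEc : L.form (L.mul (cc (Sum.inl 0)) (cc (Sum.inr 1))) (cc (Sum.inr 2))
        * L.form (L.mul (cc (Sum.inr 0)) (cc (Sum.inr 3))) (cc (Sum.inr 4))
      - L.form (L.mul (cc (Sum.inl 0)) (cc (Sum.inr 1))) (cc (Sum.inr 3))
        * L.form (L.mul (cc (Sum.inr 0)) (cc (Sum.inr 2))) (cc (Sum.inr 4))
      + L.form (L.mul (cc (Sum.inl 0)) (cc (Sum.inr 1))) (cc (Sum.inr 4))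
        * L.form (L.mul (cc (Sum.inr 0)) (cc (Sum.inr 2))) (cc (Sum.inr 3))
      + L.form (L.mul (cc (Sum.inr 0)) (cc (Sum.inr 1))) (cc (Sum.inr 2))
        * L.form (L.mul (cc (Sum.inl 0)) (cc (Sum.inr 3))) (cc (Sum.inr 4))
      - L.form (L.mul (cc (Sum.inr 0)) (cc (Sum.inr 1))) (cc (Sum.inr 3))
        * L.form (L.mul (cc (Sum.inl 0)) (cc (Sum.inr 2))) (cc (Sum.inr 4))
      + L.form (L.mul (cc (Sum.inr 0)) (cc (Sum.inr 1))) (cc (Sum.inr 4))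
        * L.form (L.mul (cc (Sum.inl 0)) (cc (Sum.inr 2))) (cc (Sum.inr 3))
      = α := by
    rw [w1c, z1, z2, z3, z4, w5c, z6, w3c, z7, z5, w4c, w2c]
    ring
  rw [← hEc]
  simp only [hgz, hgw]
  linear_combination (norm := (simp only [phiX, phiY]; ring1))
    (a * a' * (phiX L bb β (cc (Sum.inr 1)) (cc (Sum.inr 2))
        * phiX L bb β (cc (Sum.inr 3)) (cc (Sum.inr 4))
      - phiX L bb β (cc (Sum.inr 1)) (cc (Sum.inr 3))
        * phiX L bb β (cc (Sum.inr 2)) (cc (Sum.inr 4))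
      + phiX L bb β (cc (Sum.inr 1)) (cc (Sum.inr 4))
        * phiX L bb β (cc (Sum.inr 2)) (cc (Sum.inr 3)))
    + d * d' * (phiY L bb (cc (Sum.inr 1)) (cc (Sum.inr 2))
        * phiY L bb (cc (Sum.inr 3)) (cc (Sum.inr 4))
      - phiY L bb (cc (Sum.inr 1)) (cc (Sum.inr 3))
        * phiY L bb (cc (Sum.inr 2)) (cc (Sum.inr 4))
      + phiY L bb (cc (Sum.inr 1)) (cc (Sum.inr 4))
        * phiY L bb (cc (Sum.inr 2)) (cc (Sum.inr 3)))) * hchar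
end
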